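/- Let f : ℝⁿ → ℝ ∪ {+∞} have the descent property on ℝⁿ with constant L > 0, let μ ∈ (0, 1), and let x, w ∈ ℝⁿ with ‖w‖ ≤ 1 and d := df(x)(w) < 0. Suppose the step size α > 0 is produced by Armijo backtracking, i.e. either α = 1 and f(x + α w) − f(x) < (α/2) d, or α < 1 satisfies f(x + α w) − f(x) < (α/2) d while α/μ fails the test: f(x + (α/μ) w) − f(x) ≥ (α/(2μ)) d. Then the sufficient decrease inequality holds: f(x + α w) − f(x) ≤ −M · min{|d|, d²}, where M := min{1/2, μ/(2L)}. -/

import Mathlib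

open Filter Topology Set

/-- The subderivative `df(x̄)(w) := liminf_{t↓0, w'→w} (f(x̄ + t w') − f(x̄))/t`
of an extended-real-valued function. -/
noncomputable def subderiv {n : ℕ} (f : EuclideanSpace ℝ (Fin n) → EReal)
    (x w : EuclideanSpace ℝ (Fin n)) : EReal :=
  Filter.liminf
    (fun p : ℝ × EuclideanSpace ℝ (Fin n) =>
      (((p.1)⁻¹ : ℝ) : EReal) * (f (x + p.1 • p.2) - f x))
    ((𝓝[>] (0:ℝ)) ×ˢ 𝓝 w)

/-- `F` is semi-differentiable at `x` for the direction `w` with semi-derivative `d`: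
`d = lim_{t↓0, w'→w} (F(x + t w') − F(x))/t`. -/
def HasSemiderivAt {E V : Type*} [NormedAddCommGroup E] [NormedSpace ℝ E]
    [NormedAddCommGroup V] [NormedSpace ℝ V]
    (F : E → V) (x w : E) (d : V) : Prop :=
  Filter.Tendsto (fun p : ℝ × E => (p.1)⁻¹ • (F (x + p.1 • p.2) - F x))
    ((𝓝[>] (0:ℝ)) ×ˢ 𝓝 w) (𝓝 d)

/-- `f` has the descent property on `Ω` with constant `L`:
`f(y) ≤ f(x) + df(x)(y − x) + (L/2)‖y − x‖²` for all `x, y ∈ Ω`. -/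
def DescentPropOn {n : ℕ} (f : EuclideanSpace ℝ (Fin n) → EReal)
    (Ω : Set (EuclideanSpace ℝ (Fin n))) (L : ℝ) : Prop :=
  ∀ x ∈ Ω, ∀ y ∈ Ω,
    f y ≤ f x + subderiv f x (y - x) + (((L / 2) * ‖y - x‖ ^ 2 : ℝ) : EReal)

lemma subderiv_smul_le {n : ℕ} (f : EuclideanSpace ℝ (Fin n) → EReal)
    (x w : EuclideanSpace ℝ (Fin n)) (c : ℝ) (hc : 0 < c) (d : ℝ)
    (hd : subderiv f x w = ((d : ℝ) : EReal)) :
    subderiv f x (c • w) ≤ ((c * d : ℝ) : EReal) := by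
  set u : ℝ × EuclideanSpace ℝ (Fin n) → EReal := fun p =>
    (((p.1)⁻¹ : ℝ) : EReal) * (f (x + p.1 • p.2) - f x) with hu
  set Φ : ℝ × EuclideanSpace ℝ (Fin n) → ℝ × EuclideanSpace ℝ (Fin n) :=
    fun p => (c⁻¹ * p.1, c • p.2) with hΦ
  have hQ : Tendsto Φ ((𝓝[>] (0:ℝ)) ×ˢ 𝓝 w) ((𝓝[>] (0:ℝ)) ×ˢ 𝓝 (c • w)) := by
    apply Tendsto.prodMk
    · apply tendsto_nhdsWithin_of_tendsto_nhds_of_eventually_within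
      · have hfst : Tendsto (fun p : ℝ × EuclideanSpace ℝ (Fin n) => p.1)
            ((𝓝[>] (0:ℝ)) ×ˢ 𝓝 w) (𝓝 (0:ℝ)) :=
          tendsto_fst.mono_right nhdsWithin_le_nhds
        simpa using hfst.const_mul c⁻¹
      · filter_upwards [prod_mem_prod self_mem_nhdsWithin univ_mem] with p hp
        exact mul_pos (inv_pos.2 hc) hp.1
    · exact ((continuous_const_smul c).tendsto w).comp
        (tendsto_snd : Tendsto Prod.snd ((𝓝[>] (0:ℝ)) ×ˢ 𝓝 w) _)
  have hcomp : ∀ p : ℝ × EuclideanSpace ℝ (Fin n),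
      u (Φ p) = ((c : ℝ) : EReal) * u p := by
    intro p
    have h1 : (c⁻¹ * p.1)⁻¹ = c * (p.1)⁻¹ := by
      rw [mul_inv, inv_inv]
    have h2 : x + (c⁻¹ * p.1) • (c • p.2) = x + p.1 • p.2 := by
      rw [smul_smul, mul_comm c⁻¹ p.1, mul_assoc, inv_mul_cancel₀ hc.ne', mul_one]
    simp only [hu, hΦ, h1, h2, EReal.coe_mul, mul_assoc]
  have key : subderiv f x (c • w) ≤ Filter.liminf (fun p => ((c : ℝ) : EReal) * u p)
      ((𝓝[>] (0:ℝ)) ×ˢ 𝓝 w) := by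
    have h1 : subderiv f x (c • w) ≤ Filter.liminf u (Filter.map Φ ((𝓝[>] (0:ℝ)) ×ˢ 𝓝 w)) :=
      Filter.liminf_le_liminf_of_le hQ
    refine h1.trans_eq ?_
    rw [show Filter.liminf u (Filter.map Φ ((𝓝[>] (0:ℝ)) ×ˢ 𝓝 w))
        = Filter.liminf (u ∘ Φ) ((𝓝[>] (0:ℝ)) ×ˢ 𝓝 w) by
      simp [Filter.liminf, Filter.map_map]]
    exact Filter.liminf_congr (Filter.Eventually.of_forall hcomp)
  refine key.trans ?_
  by_contra hcon
  push_neg at hcon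
  obtain ⟨q, hq1, hq2⟩ := EReal.lt_iff_exists_real_btwn.1 hcon
  have hq1' : c * d < q := EReal.coe_lt_coe_iff.1 hq1
  set ε : ℝ := (q - c * d) / c with hε
  have hεpos : 0 < ε := div_pos (by linarith) hc
  have hfreq : ∃ᶠ p in ((𝓝[>] (0:ℝ)) ×ˢ 𝓝 w), u p < ((d + ε : ℝ) : EReal) := by
    refine Filter.frequently_lt_of_liminf_lt (by isBoundedDefault) ?_
    rw [show Filter.liminf u ((𝓝[>] (0:ℝ)) ×ˢ 𝓝 w) = subderiv f x w from rfl, hd]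
    exact_mod_cast lt_add_of_pos_right d hεpos
  have hfreq2 : ∃ᶠ p in ((𝓝[>] (0:ℝ)) ×ˢ 𝓝 w),
      ((c : ℝ) : EReal) * u p ≤ ((c * (d + ε) : ℝ) : EReal) := by
    refine hfreq.mono fun p hp => ?_
    rw [EReal.coe_mul]
    exact mul_le_mul_of_nonneg_left hp.le (by exact_mod_cast hc.le)
  have hle := Filter.liminf_le_of_frequently_le hfreq2
  have heq : ((c * (d + ε) : ℝ) : EReal) = (q : EReal) := by
    norm_cast
    field_simp [hε]
    rw [hε, mul_add, mul_div_cancel₀ _ hc.ne']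
    ring
  exact absurd (hle.trans_eq heq) (not_le.2 hq2)

/-- sufficient decrease for a step size produced by Armijo backtracking.
If `f` has the descent property on `ℝⁿ` with constant `L > 0`, `‖w‖ ≤ 1`,
`d = df(x)(w) < 0`, and `α` is produced by Armijo backtracking with reduction multiple
`μ ∈ (0,1)` (either `α = 1` passes the test, or `α < 1` passes while `α/μ` fails),
then `f(x + α w) − f(x) ≤ −M·min{|d|, d²}` with `M = min{1/2, μ/(2L)}`. -/
theorem armijo_sufficient_decrease {n : ℕ}
    (f : EuclideanSpace ℝ (Fin n) → EReal)
    -- `f` takes values in ℝ ∪ {+∞}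
    (hf_ne_bot : ∀ z, f z ≠ ⊥)
    (L : ℝ) (hL : 0 < L)
    (hdesc : DescentPropOn f Set.univ L)
    (μ : ℝ) (hμ : μ ∈ Set.Ioo (0:ℝ) 1)
    (x w : EuclideanSpace ℝ (Fin n)) (hw : ‖w‖ ≤ 1)
    (d : ℝ) (hd : subderiv f x w = ((d : ℝ) : EReal)) (hdneg : d < 0)
    (α : ℝ)
    -- `α` is produced by Armijo backtracking
    (harmijo :
      (α = 1 ∧ f (x + α • w) - f x < ((α / 2 * d : ℝ) : EReal)) ∨
      (α < 1 ∧ 0 < α ∧ f (x + α • w) - f x < ((α / 2 * d : ℝ) : EReal) ∧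
        ¬ (f (x + (α / μ) • w) - f x < ((α / (2 * μ) * d : ℝ) : EReal)))) :
    f (x + α • w) - f x ≤
      ((-(min (1/2) (μ / (2 * L)) * min |d| (d ^ 2)) : ℝ) : EReal) := by
  obtain ⟨hμ0, hμ1⟩ := hμ
  set M : ℝ := min (1/2) (μ / (2 * L)) with hM
  have hM0 : 0 ≤ M := le_min (by norm_num) (by positivity)
  have habs : |d| = -d := abs_of_neg hdneg
  have hm0 : 0 ≤ min |d| (d ^ 2) := le_min (abs_nonneg d) (sq_nonneg d)
  rcases harmijo with ⟨hα1, hpass⟩ | ⟨hα1, hα0, hpass, hfail⟩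
  · subst hα1
    refine hpass.le.trans (EReal.coe_le_coe_iff.2 ?_)
    have h1 : min |d| (d ^ 2) ≤ |d| := min_le_left _ _
    have h2 : M ≤ 1/2 := min_le_left _ _
    nlinarith [mul_le_mul h2 h1 hm0 (by norm_num : (0:ℝ) ≤ 1/2)]
  · -- main case
    by_cases hxt : f x = ⊤
    · rw [hxt, EReal.sub_top]; exact bot_le
    obtain ⟨r, hr⟩ : ∃ r : ℝ, f x = (r : EReal) :=
      ⟨(f x).toReal, (EReal.coe_toReal hxt (hf_ne_bot x)).symm⟩
    set β : ℝ := α / μ with hβ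
    have hβ0 : 0 < β := div_pos hα0 hμ0
    have hsub : subderiv f x (β • w) ≤ ((β * d : ℝ) : EReal) :=
      subderiv_smul_le f x w β hβ0 d hd
    have hdescent := hdesc x (mem_univ x) (x + β • w) (mem_univ _)
    rw [add_sub_cancel_left] at hdescent
    have hnorm : ‖β • w‖ ^ 2 ≤ β ^ 2 := by
      rw [norm_smul, Real.norm_eq_abs, abs_of_pos hβ0]
      have hw2 : ‖w‖ ^ 2 ≤ 1 := by nlinarith [norm_nonneg w]
      calc (β * ‖w‖) ^ 2 = β ^ 2 * ‖w‖ ^ 2 := by ring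
        _ ≤ β ^ 2 * 1 := mul_le_mul_of_nonneg_left hw2 (sq_nonneg β)
        _ = β ^ 2 := mul_one _
    have hupper : f (x + β • w) ≤ ((r + β * d + L / 2 * ‖β • w‖ ^ 2 : ℝ) : EReal) := by
      refine hdescent.trans ?_
      rw [hr]
      calc (r : EReal) + subderiv f x (β • w) + ((L / 2 * ‖β • w‖ ^ 2 : ℝ) : EReal)
          ≤ (r : EReal) + ((β * d : ℝ) : EReal) + ((L / 2 * ‖β • w‖ ^ 2 : ℝ) : EReal) :=
            add_le_add (add_le_add le_rfl hsub) le_rfl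
        _ = ((r + β * d + L / 2 * ‖β • w‖ ^ 2 : ℝ) : EReal) := by norm_cast
    have hlower : ((α / (2 * μ) * d : ℝ) : EReal) ≤ f (x + β • w) - f x := not_lt.1 hfail
    have hchain : ((α / (2 * μ) * d : ℝ) : EReal)
        ≤ ((r + β * d + L / 2 * ‖β • w‖ ^ 2 - r : ℝ) : EReal) := by
      refine hlower.trans ?_
      rw [hr]
      calc f (x + β • w) - (r : EReal)
          ≤ ((r + β * d + L / 2 * ‖β • w‖ ^ 2 : ℝ) : EReal) - (r : EReal) :=
            EReal.sub_le_sub hupper le_rfl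
        _ = ((r + β * d + L / 2 * ‖β • w‖ ^ 2 - r : ℝ) : EReal) := by norm_cast
    have hreal : α / (2 * μ) * d ≤ β * d + L / 2 * β ^ 2 := by
      have := EReal.coe_le_coe_iff.1 hchain
      nlinarith [hnorm, hL]
    -- derive α ≥ μ * (-d) / L
    have hαge : μ * (-d) / L ≤ α := by
      have hβd : β / 2 * d ≤ β * d + L / 2 * β ^ 2 := by
        have : α / (2 * μ) = β / 2 := by rw [hβ]; ring
        linarith [hreal, this ▸ hreal]
      have h1 : -d ≤ L * β := by
        have h2 : -(β / 2) * d ≤ L / 2 * β ^ 2 := by linarith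
        have := mul_le_mul_of_nonneg_left h2 (le_of_lt (by positivity : (0:ℝ) < 2 / β))
        have hβne : β ≠ 0 := hβ0.ne'
        calc -d = 2 / β * (-(β / 2) * d) := by field_simp
          _ ≤ 2 / β * (L / 2 * β ^ 2) := this
          _ = L * β := by field_simp
      rw [div_le_iff₀ hL]
      calc μ * -d ≤ μ * (L * β) := mul_le_mul_of_nonneg_left h1 hμ0.le
        _ = α * L := by rw [hβ]; field_simp
    refine hpass.le.trans (EReal.coe_le_coe_iff.2 ?_)
    have h2 : M ≤ μ / (2 * L) := min_le_right _ _
    have h3 : min |d| (d ^ 2) ≤ d ^ 2 := min_le_right _ _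
    have h4 : α * (-d) ≥ μ * (-d) / L * (-d) :=
      mul_le_mul_of_nonneg_right hαge (by linarith)
    have h5 : M * min |d| (d ^ 2) ≤ μ / (2 * L) * d ^ 2 :=
      mul_le_mul h2 h3 hm0 (by positivity)
    have h6 : μ * (-d) / L * (-d) = μ / L * d ^ 2 := by ring
    have h7 : μ / (2 * L) * d ^ 2 = 1 / 2 * (μ / L * d ^ 2) := by ring
    linarith [h4, h5, h6, h7]
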